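/- If u and v are uniform twins or opposite twins in an oriented graph G^σ, then sr(G^σ) = sr(G^σ - u) = sr(G^σ - v). -/

import Mathlib

/-- S is the skew-adjacency matrix of some oriented graph: it is skew-symmetric
with entries in {0, 1, -1}. -/
def IsSkewAdjacency {V : Type} [Fintype V] [DecidableEq V] (S : Matrix V V ℝ) : Prop :=
  S.transpose = -S ∧ ∀ i j : V, S i j = 0 ∨ S i j = 1 ∨ S i j = -1

/-- S is the skew-adjacency matrix of an orientation of the simple graph G. -/
def IsSkewAdjacencyOf {V : Type} [Fintype V] [DecidableEq V]
    (S : Matrix V V ℝ) (G : SimpleGraph V) : Prop :=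
  IsSkewAdjacency S ∧ ∀ i j : V, S i j ≠ 0 ↔ G.Adj i j

/-- Dropping a column that is a multiple of another column does not change rank. -/
lemma rank_drop_col {m n : Type} [Fintype m] [Fintype n] [DecidableEq m] [DecidableEq n]
    (A : Matrix m n ℝ) (u v : n) (hvu : v ≠ u) (c : ℝ)
    (h : ∀ i, A i u = c * A i v) :
    A.rank = (A.submatrix (id : m → m) (fun j : {j : n // j ≠ u} => (j : n))).rank := by
  rw [Matrix.rank_eq_finrank_span_cols, Matrix.rank_eq_finrank_span_cols]
  have hr : Set.range (Matrix.transpose (A.submatrix (id : m → m)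
      (fun j : {j : n // j ≠ u} => (j : n)))) = (Matrix.transpose A) '' {j | j ≠ u} := by
    ext x
    constructor
    · rintro ⟨⟨j, hj⟩, rfl⟩
      exact ⟨j, hj, rfl⟩
    · rintro ⟨j, hj, rfl⟩
      exact ⟨⟨j, hj⟩, rfl⟩
  change Module.finrank ℝ (Submodule.span ℝ (Set.range (Matrix.transpose A))) =
    Module.finrank ℝ (Submodule.span ℝ (Set.range (Matrix.transpose (A.submatrix (id : m → m)
      (fun j : {j : n // j ≠ u} => (j : n))))))
  rw [hr]
  have hspan : Submodule.span ℝ (Set.range (Matrix.transpose A)) =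
      Submodule.span ℝ ((Matrix.transpose A) '' {j | j ≠ u}) := by
    apply le_antisymm
    · rw [Submodule.span_le]
      rintro x ⟨j, rfl⟩
      by_cases hj : j = u
      · subst hj
        have hcu : Matrix.transpose A j = c • Matrix.transpose A v := by
          funext i
          simp [Matrix.transpose_apply, h i]
        rw [hcu]
        exact Submodule.smul_mem _ _ (Submodule.subset_span ⟨v, hvu, rfl⟩)
      · exact Submodule.subset_span ⟨j, hj, rfl⟩
    · exact Submodule.span_mono (Set.image_subset_range _ _)
  rw [hspan]

/-- Dropping a row that is a multiple of another row does not change rank. -/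
lemma rank_drop_row {m n : Type} [Fintype m] [Fintype n] [DecidableEq m] [DecidableEq n]
    (A : Matrix m n ℝ) (u v : m) (hvu : v ≠ u) (c : ℝ)
    (h : ∀ j, A u j = c * A v j) :
    A.rank = (A.submatrix (fun i : {i : m // i ≠ u} => (i : m)) (id : n → n)).rank := by
  rw [← Matrix.rank_transpose A,
    ← Matrix.rank_transpose (A.submatrix (fun i : {i : m // i ≠ u} => (i : m)) (id : n → n))]
  exact rank_drop_col (Matrix.transpose A) u v hvu c (fun j => h j)

lemma rank_drop_both {V : Type} [Fintype V] [DecidableEq V]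
    (S : Matrix V V ℝ) (hskew : S.transpose = -S)
    (u v : V) (hvu : v ≠ u) (c : ℝ)
    (h : ∀ w, S u w = c * S v w) :
    S.rank = (S.submatrix (fun w : {w : V // w ≠ u} => (w : V))
        (fun w : {w : V // w ≠ u} => (w : V))).rank := by
  have hcol : ∀ i, S i u = c * S i v := by
    intro i
    have h1 : S i u = -S u i := by
      have := congrFun (congrFun hskew u) i
      simpa [Matrix.transpose_apply] using this
    have h2 : S i v = -S v i := by
      have := congrFun (congrFun hskew v) i
      simpa [Matrix.transpose_apply] using this
    rw [h1, h2, h i]; ring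
  have step1 : S.rank =
      (S.submatrix (id : V → V) (fun j : {j : V // j ≠ u} => (j : V))).rank :=
    rank_drop_col S u v hvu c hcol
  have step2 : (S.submatrix (id : V → V) (fun j : {j : V // j ≠ u} => (j : V))).rank =
      ((S.submatrix (id : V → V) (fun j : {j : V // j ≠ u} => (j : V))).submatrix
        (fun i : {i : V // i ≠ u} => (i : V)) (id : {j : V // j ≠ u} → {j : V // j ≠ u})).rank :=
    rank_drop_row _ u v hvu c (fun j => h j)
  rw [step1, step2]
  rfl

/-- Deleting a uniform or opposite twin does not change the skew-rank. -/
theorem skewRank_delete_twin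
    {V : Type} [Fintype V] [DecidableEq V]
    (S : Matrix V V ℝ) (hS : IsSkewAdjacency S)
    (u v : V) (huv : u ≠ v) (hnadj : S u v = 0)
    (htwin : (∀ w : V, S u w = S v w) ∨ (∀ w : V, S u w = -S v w)) :
    S.rank =
      (S.submatrix (fun w : {w : V // w ≠ u} => (w : V))
        (fun w : {w : V // w ≠ u} => (w : V))).rank ∧
    S.rank =
      (S.submatrix (fun w : {w : V // w ≠ v} => (w : V))
        (fun w : {w : V // w ≠ v} => (w : V))).rank := by
  obtain ⟨c, hc, hc2⟩ : ∃ c : ℝ, (∀ w, S u w = c * S v w) ∧ c * c = 1 := by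
    rcases htwin with h | h
    · exact ⟨1, fun w => by rw [h w]; ring, by ring⟩
    · exact ⟨-1, fun w => by rw [h w]; ring, by ring⟩
  have hc' : ∀ w, S v w = c * S u w := by
    intro w
    rw [hc w, ← mul_assoc, hc2, one_mul]
  exact ⟨rank_drop_both S hS.1 u v huv.symm c hc,
    rank_drop_both S hS.1 v u huv c hc'⟩
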